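/- Let L > 0, f ∈ ℝ, and let P : ℝ → ℂ be a measurable function with P(t + L) = P(t) for all t ∈ ℝ and with ∫_0^L |P(t)|² dt < ∞. Define y(t) = e^{f t} P(t). If T₁ < T₂ and ∫_{T₁−L}^{T₂−L} |y(t)|² dt ≠ 0, then f = (1/L) · ln( ‖y‖_{L²(T₁,T₂)} / ‖y‖_{L²(T₁−L,T₂−L)} ). -/

import Mathlib

open MeasureTheory

/-- Exact recovery formula for the exponent `f` from two shifted windows of the output
(equation (2.7) of Theorem 2.1 of the paper). -/
theorem exponent_recovery (L : ℝ) (hL : 0 < L) (f : ℝ) (P : ℝ → ℂ)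
    (hPmeas : Measurable P) (hPper : ∀ t : ℝ, P (t + L) = P t)
    (hPint : IntervalIntegrable (fun t => ‖P t‖ ^ 2) volume 0 L)
    (y : ℝ → ℂ) (hy : ∀ t : ℝ, y t = Complex.exp ((f : ℂ) * (t : ℂ)) * P t)
    (T₁ T₂ : ℝ) (h12 : T₁ < T₂)
    (hne : (∫ t in (T₁ - L)..(T₂ - L), ‖y t‖ ^ 2) ≠ 0) :
    f = (1 / L) * Real.log (Real.sqrt (∫ t in T₁..T₂, ‖y t‖ ^ 2) /
          Real.sqrt (∫ t in (T₁ - L)..(T₂ - L), ‖y t‖ ^ 2)) := by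
  set I : ℝ := ∫ t in (T₁ - L)..(T₂ - L), ‖y t‖ ^ 2 with hI
  have hInonneg : 0 ≤ I :=
    intervalIntegral.integral_nonneg (by linarith) (fun u _ => by positivity)
  have hIpos : 0 < I := lt_of_le_of_ne hInonneg (Ne.symm hne)
  have hnorm : ∀ t : ℝ, ‖y t‖ ^ 2 = Real.exp (2 * f * t) * ‖P t‖ ^ 2 := by
    intro t
    rw [hy t, norm_mul, Complex.norm_exp]
    simp only [Complex.mul_re, Complex.ofReal_re, Complex.ofReal_im, mul_zero, sub_zero]
    rw [mul_pow, ← Real.exp_nat_mul]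
    ring_nf
  have hkey : (∫ t in T₁..T₂, ‖y t‖ ^ 2) = Real.exp (2 * f * L) * I := by
    have h1 : (∫ t in T₁..T₂, ‖y t‖ ^ 2)
        = ∫ t in (T₁ - L)..(T₂ - L), ‖y (t + L)‖ ^ 2 := by
      rw [intervalIntegral.integral_comp_add_right (fun t => ‖y t‖ ^ 2) L]
      norm_num
    rw [h1, ← intervalIntegral.integral_const_mul]
    apply intervalIntegral.integral_congr
    intro t _
    simp only
    rw [hnorm, hnorm, hPper t]
    rw [← mul_assoc, ← Real.exp_add]
    ring_nf
  have hsqrt : Real.sqrt (∫ t in T₁..T₂, ‖y t‖ ^ 2)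
      = Real.exp (f * L) * Real.sqrt I := by
    rw [hkey, Real.sqrt_mul (Real.exp_nonneg _), ← Real.exp_half]
    ring_nf
  have hsI : Real.sqrt I ≠ 0 := by positivity
  rw [hsqrt, mul_div_assoc, div_self hsI, mul_one, Real.log_exp]
  field_simp
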